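/- Let S_1,…,S_m be finite sets and let {f_{s_1,…,s_m}} be an interlacing family of real-rooted degree-n polynomials with positive leading coefficients. Then there exists an assignment (s_1,…,s_m) ∈ S_1×…×S_m such that the largest root of f_{s_1,…,s_m} is at most the largest root of f_∅ = Σ_{(s_1,…,s_m)} f_{s_1,…,s_m}. -/

import Mathlib

open scoped Classical
open Polynomial

/-- A real polynomial is real-rooted if it has a full set of real roots
(counted with multiplicity). -/
def RealRooted (f : Polynomial ℝ) : Prop := Multiset.card f.roots = f.natDegree

/-- The roots of a real polynomial, sorted in increasing order. -/
noncomputable def sortedRoots (f : Polynomial ℝ) : List ℝ := f.roots.sort (· ≤ ·)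

/-- `g` interlaces `f`: both are real-rooted, `deg g = deg f - 1`, and the sorted
roots satisfy `β₁ ≤ α₁ ≤ β₂ ≤ ⋯ ≤ α_{n-1} ≤ β_n`. -/
def Interlaces (g f : Polynomial ℝ) : Prop :=
  RealRooted f ∧ RealRooted g ∧ g.natDegree + 1 = f.natDegree ∧
  ∀ k, k < g.natDegree →
    (sortedRoots f).getD k 0 ≤ (sortedRoots g).getD k 0 ∧
    (sortedRoots g).getD k 0 ≤ (sortedRoots f).getD (k + 1) 0

/-- The largest real root of a polynomial. -/
noncomputable def maxRoot (f : Polynomial ℝ) : ℝ := sSup {x : ℝ | f.IsRoot x}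

/-- The sum of the polynomials over all assignments agreeing with `s` on the first `k`
coordinates. -/
noncomputable def partialSum (m : ℕ) (S : Fin m → Type) [∀ i, Fintype (S i)]
    (f : (∀ i, S i) → Polynomial ℝ) (k : ℕ) (s : ∀ i, S i) : Polynomial ℝ :=
  ∑ t ∈ Finset.univ.filter (fun t : ∀ i, S i => ∀ i : Fin m, (i : ℕ) < k → t i = s i), f t

/-- `f` is an interlacing family: for every partial assignment, the polynomials obtained
by extending it by one coordinate have a common interlacing. -/
def InterlacingFamily (m : ℕ) (S : Fin m → Type) [∀ i, Fintype (S i)]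
    (f : (∀ i, S i) → Polynomial ℝ) : Prop :=
  ∀ (k : ℕ) (hk : k < m) (s : ∀ i, S i),
    ∃ g : Polynomial ℝ, g.Monic ∧
      ∀ t : S ⟨k, hk⟩,
        Interlaces g (partialSum m S f (k + 1) (Function.update s ⟨k, hk⟩ t))

section Helpers

lemma rootSet_finite (f : Polynomial ℝ) (hf : f ≠ 0) : {x : ℝ | f.IsRoot x}.Finite := by
  have : {x : ℝ | f.IsRoot x} = ↑f.roots.toFinset := by
    ext x; simp [Polynomial.mem_roots', hf]
  rw [this]; exact f.roots.toFinset.finite_toSet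

lemma le_maxRoot {f : Polynomial ℝ} (hf : f ≠ 0) {x : ℝ} (hx : f.IsRoot x) : x ≤ maxRoot f :=
  le_csSup (rootSet_finite f hf).bddAbove hx

lemma maxRoot_le_of_eval_nonpos {f : Polynomial ℝ} (hl : 0 < f.leadingCoeff) {x : ℝ}
    (hx : f.eval x ≤ 0) : x ≤ maxRoot f := by
  have hf : f ≠ 0 := fun h => by simp [h] at hl
  rcases hx.lt_or_eq with hneg | h0
  · have hdeg : 0 < f.degree := by
      rcases Nat.eq_zero_or_pos f.natDegree with h | h
      · exfalso
        have hC := Polynomial.eq_C_of_natDegree_eq_zero h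
        have : f.eval x = f.leadingCoeff := by
          rw [Polynomial.leadingCoeff, h]
          conv_lhs => rw [hC]
          simp
        linarith
      · exact Polynomial.natDegree_pos_iff_degree_pos.1 h
    have htend := f.tendsto_atTop_of_leadingCoeff_nonneg hdeg hl.le
    obtain ⟨y, hy1, hy2⟩ := ((htend.eventually_ge_atTop 1).and (Filter.eventually_gt_atTop x)).exists
    have hcont : ContinuousOn (fun z => f.eval z) (Set.Icc x y) :=
      (Polynomial.continuous f).continuousOn
    have h0mem : (0 : ℝ) ∈ Set.Ioo (f.eval x) (f.eval y) := ⟨hneg, by linarith⟩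
    obtain ⟨z, hz, hz0⟩ := intermediate_value_Ioo hy2.le hcont h0mem
    have := le_maxRoot hf (show f.IsRoot z from hz0)
    linarith [hz.1]
  · exact le_maxRoot hf h0

lemma eval_pos_of_maxRoot_lt {f : Polynomial ℝ} (hl : 0 < f.leadingCoeff) {x : ℝ}
    (hx : maxRoot f < x) : 0 < f.eval x := by
  by_contra h
  push_neg at h
  exact absurd (maxRoot_le_of_eval_nonpos hl h) (not_le.2 hx)

lemma sortedRoots_length (f : Polynomial ℝ) :
    (sortedRoots f).length = Multiset.card f.roots := Multiset.length_sort _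

lemma mem_sortedRoots {f : Polynomial ℝ} {a : ℝ} : a ∈ sortedRoots f ↔ a ∈ f.roots :=
  Multiset.mem_sort _

lemma sortedRoots_sorted (f : Polynomial ℝ) : (sortedRoots f).Pairwise (· ≤ ·) :=
  Multiset.pairwise_sort _ _

lemma eval_eq_prod {f : Polynomial ℝ} (hf : RealRooted f) (x : ℝ) :
    f.eval x = f.leadingCoeff * ((sortedRoots f).map (fun a => x - a)).prod := by
  have hs : f.Splits := Polynomial.splits_iff_card_roots.2 hf
  conv_lhs => rw [hs.eq_prod_roots]
  rw [Polynomial.eval_mul, Polynomial.eval_C, Polynomial.eval_multiset_prod]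
  congr 1
  have : f.roots = ↑(sortedRoots f) := (Multiset.sort_eq _ _).symm
  rw [this, Multiset.map_coe, Multiset.map_coe, Multiset.prod_coe, List.map_map]
  congr 1
  ext a
  simp

lemma eval_nonpos_of_between {f : Polynomial ℝ} (hf : RealRooted f) (hl : 0 < f.leadingCoeff)
    (hn : 1 ≤ f.natDegree) {x : ℝ}
    (h1 : ∀ i, i < f.natDegree - 1 → (sortedRoots f).getD i 0 ≤ x)
    (h2 : x ≤ (sortedRoots f).getD (f.natDegree - 1) 0) : f.eval x ≤ 0 := by
  set L := sortedRoots f with hL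
  have hlen : L.length = f.natDegree := by rw [hL, sortedRoots_length, hf]
  have hne : L ≠ [] := by
    intro h; rw [h] at hlen; simp at hlen; omega
  rw [eval_eq_prod hf x]
  have hsplit : L.dropLast ++ [L.getLast hne] = L := L.dropLast_append_getLast hne
  have hlast : L.getLast hne = L.getD (f.natDegree - 1) 0 := by
    rw [List.getLast_eq_getElem, List.getD_eq_getElem L 0 (by omega)]
    congr 1
    omega
  have hprodA : 0 ≤ (L.dropLast.map (fun a => x - a)).prod := by
    apply List.prod_nonneg
    intro b hb
    obtain ⟨a, ha, rfl⟩ := List.mem_map.1 hb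
    obtain ⟨i, hi, rfl⟩ := List.mem_iff_getElem.1 ha
    have hi' : i < f.natDegree - 1 := by
      simpa [List.length_dropLast, hlen] using hi
    have : L.dropLast[i] = L[i]'(by omega) := List.getElem_dropLast _
    rw [this]
    have := h1 i hi'
    rw [List.getD_eq_getElem L 0 (by omega)] at this
    linarith
  have hlastle : x - L.getLast hne ≤ 0 := by rw [hlast]; linarith
  calc f.leadingCoeff * ((sortedRoots f).map (fun a => x - a)).prod
      = f.leadingCoeff * ((L.dropLast.map (fun a => x - a)).prod * (x - L.getLast hne)) := by
        conv_lhs => rw [← hL, ← hsplit]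
        rw [List.map_append, List.prod_append]
        simp
    _ ≤ 0 := mul_nonpos_of_nonneg_of_nonpos hl.le
        (mul_nonpos_of_nonneg_of_nonpos hprodA hlastle)

lemma maxRoot_eq_getD {f : Polynomial ℝ} (hf : RealRooted f) (hn : 1 ≤ f.natDegree) :
    maxRoot f = (sortedRoots f).getD (f.natDegree - 1) 0 := by
  have hf0 : f ≠ 0 := by
    intro h; rw [h] at hn; simp at hn
  set L := sortedRoots f with hL
  have hlen : L.length = f.natDegree := by rw [hL, sortedRoots_length, hf]
  have hmem : L.getD (f.natDegree - 1) 0 ∈ L := by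
    rw [List.getD_eq_getElem L 0 (by omega)]
    exact List.getElem_mem _
  have hroot : f.IsRoot (L.getD (f.natDegree - 1) 0) :=
    (Polynomial.mem_roots'.1 (mem_sortedRoots.1 hmem)).2
  have h1 : L.getD (f.natDegree - 1) 0 ≤ maxRoot f := le_maxRoot hf0 hroot
  have h2 : maxRoot f ≤ L.getD (f.natDegree - 1) 0 := by
    have hset : {x : ℝ | f.IsRoot x}.Nonempty := ⟨_, hroot⟩
    have hmax_mem : maxRoot f ∈ {x : ℝ | f.IsRoot x} :=
      hset.csSup_mem (rootSet_finite f hf0)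
    have : maxRoot f ∈ L := mem_sortedRoots.2 (Polynomial.mem_roots'.2 ⟨hf0, hmax_mem⟩)
    obtain ⟨i, hi, hieq⟩ := List.mem_iff_getElem.1 this
    rw [← hieq, List.getD_eq_getElem L 0 (by omega)]
    have hsorted : L.Pairwise (· ≤ ·) := sortedRoots_sorted f
    rcases Nat.lt_or_ge i (f.natDegree - 1) with h | h
    · have := hsorted.rel_get_of_lt (a := ⟨i, hi⟩) (b := ⟨f.natDegree - 1, by omega⟩)
        (Fin.mk_lt_mk.2 h)
      simpa [List.get_eq_getElem] using this
    · have : i = f.natDegree - 1 := by omega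
      subst this; rfl
  linarith

lemma sum_natDegree_leadingCoeff {ι : Type*} (A : Finset ι) (hA : A.Nonempty)
    (F : ι → Polynomial ℝ) (n : ℕ) (hd : ∀ t ∈ A, (F t).natDegree = n)
    (hl : ∀ t ∈ A, 0 < (F t).leadingCoeff) :
    (∑ t ∈ A, F t).natDegree = n ∧ 0 < (∑ t ∈ A, F t).leadingCoeff := by
  have hpos : 0 < (∑ t ∈ A, F t).coeff n := by
    rw [Polynomial.finset_sum_coeff]
    apply Finset.sum_pos _ hA
    intro t ht
    have : (F t).coeff n = (F t).leadingCoeff := by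
      rw [Polynomial.leadingCoeff, hd t ht]
    rw [this]; exact hl t ht
  have hle : (∑ t ∈ A, F t).natDegree ≤ n :=
    Polynomial.natDegree_sum_le_of_forall_le A F (fun t ht => (hd t ht).le)
  have hge : n ≤ (∑ t ∈ A, F t).natDegree := Polynomial.le_natDegree_of_ne_zero hpos.ne'
  have hdeg : (∑ t ∈ A, F t).natDegree = n := le_antisymm hle hge
  exact ⟨hdeg, by rw [Polynomial.leadingCoeff, hdeg]; exact hpos⟩

lemma getD_le_maxRoot {g : Polynomial ℝ} (hg : RealRooted g) (hg0 : g ≠ 0) {i : ℕ}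
    (hi : i < g.natDegree) : (sortedRoots g).getD i 0 ≤ maxRoot g := by
  have hlen : (sortedRoots g).length = g.natDegree := by rw [sortedRoots_length, hg]
  have hmem : (sortedRoots g).getD i 0 ∈ sortedRoots g := by
    rw [List.getD_eq_getElem _ 0 (by omega)]
    exact List.getElem_mem _
  exact le_maxRoot hg0 (Polynomial.mem_roots'.1 (mem_sortedRoots.1 hmem)).2

lemma key_lemma {ι : Type*} [Fintype ι] [Nonempty ι] (F : ι → Polynomial ℝ) (g : Polynomial ℝ)
    (hg : g.Monic) (hI : ∀ t, Interlaces g (F t)) (hl : ∀ t, 0 < (F t).leadingCoeff) :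
    ∃ t, maxRoot (F t) ≤ maxRoot (∑ t, F t) := by
  obtain ⟨t0⟩ := ‹Nonempty ι›
  set n := g.natDegree + 1 with hn
  have hdF : ∀ t, (F t).natDegree = n := fun t => ((hI t).2.2.1).symm
  have hrF : ∀ t, RealRooted (F t) := fun t => (hI t).1
  have hrg : RealRooted g := (hI t0).2.1
  have hg0 : g ≠ 0 := hg.ne_zero
  obtain ⟨hdS, hlS⟩ := sum_natDegree_leadingCoeff Finset.univ Finset.univ_nonempty F n
    (fun t _ => hdF t) (fun t _ => hl t)
  set μ := maxRoot (∑ t, F t) with hμ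
  by_contra hcon
  push_neg at hcon
  have hβα : ∀ t, ∀ i, i < n - 1 → (sortedRoots (F t)).getD i 0 ≤ maxRoot g := by
    intro t i hi
    exact le_trans ((hI t).2.2.2 i (by omega)).1 (getD_le_maxRoot hrg hg0 (by omega))
  have hβμ : ∀ t, ∀ i, i < n - 1 → (sortedRoots (F t)).getD i 0 ≤ μ := by
    intro t i hi
    have hn2 : 2 ≤ n := by omega
    have hαμ : maxRoot g ≤ μ := by
      apply maxRoot_le_of_eval_nonpos hlS
      rw [Polynomial.eval_finset_sum]
      apply Finset.sum_nonpos
      intro u _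
      apply eval_nonpos_of_between (hrF u) (hl u) (by rw [hdF u]; omega)
      · intro j hj
        rw [hdF u] at hj
        exact hβα u j hj
      · rw [hdF u]
        have hαg : maxRoot g = (sortedRoots g).getD (n - 2) 0 := by
          have h := maxRoot_eq_getD hrg (by omega : 1 ≤ g.natDegree)
          rw [show g.natDegree - 1 = n - 2 from by omega] at h
          exact h
        rw [hαg]
        have h := ((hI u).2.2.2 (n - 2) (by omega)).2
        have he : n - 2 + 1 = n - 1 := by omega
        rwa [he] at h
    exact le_trans (hβα t i hi) hαμ
  have hmaxF : ∀ t, maxRoot (F t) = (sortedRoots (F t)).getD (n - 1) 0 := by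
    intro t
    have h := maxRoot_eq_getD (hrF t) (by rw [hdF t]; omega)
    rwa [hdF t] at h
  have hbne : (Finset.univ : Finset ι).Nonempty := Finset.univ_nonempty
  set b := Finset.univ.inf' hbne (fun t => maxRoot (F t)) with hb
  have hμb : μ < b := (Finset.lt_inf'_iff hbne).2 (fun t _ => hcon t)
  set x := (μ + b) / 2 with hx
  have hx1 : μ < x := by rw [hx]; linarith
  have hx2 : x < b := by rw [hx]; linarith
  have hsum_nonpos : (∑ t, F t).eval x ≤ 0 := by
    rw [Polynomial.eval_finset_sum]
    apply Finset.sum_nonpos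
    intro u _
    apply eval_nonpos_of_between (hrF u) (hl u) (by rw [hdF u]; omega)
    · intro j hj
      rw [hdF u] at hj
      exact le_trans (hβμ u j hj) hx1.le
    · rw [hdF u, ← hmaxF u]
      exact le_trans hx2.le (Finset.inf'_le _ (Finset.mem_univ u))
  have hpos := eval_pos_of_maxRoot_lt hlS hx1
  linarith

variable {m : ℕ} {S : Fin m → Type} [∀ i, Fintype (S i)]

lemma partialSum_zero (f : (∀ i, S i) → Polynomial ℝ) (s : ∀ i, S i) :
    partialSum m S f 0 s = ∑ t : ∀ i, S i, f t := by
  unfold partialSum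
  congr 1
  rw [Finset.filter_true_of_mem]
  intro t _ i hi
  exact absurd hi (Nat.not_lt_zero _)

lemma partialSum_last (f : (∀ i, S i) → Polynomial ℝ) (s : ∀ i, S i) :
    partialSum m S f m s = f s := by
  unfold partialSum
  have : Finset.univ.filter (fun t : ∀ i, S i => ∀ i : Fin m, (i : ℕ) < m → t i = s i)
      = {s} := by
    ext t
    simp only [Finset.mem_filter, Finset.mem_univ, true_and, Finset.mem_singleton]
    constructor
    · intro h
      funext i
      exact h i i.isLt
    · rintro rfl i _
      rfl
  rw [this, Finset.sum_singleton]

lemma partialSum_succ (f : (∀ i, S i) → Polynomial ℝ) (k : ℕ) (hk : k < m) (s : ∀ i, S i) :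
    partialSum m S f k s
      = ∑ t : S ⟨k, hk⟩, partialSum m S f (k + 1) (Function.update s ⟨k, hk⟩ t) := by
  unfold partialSum
  rw [← Finset.sum_fiberwise_of_maps_to (g := fun t' : ∀ i, S i => t' ⟨k, hk⟩)
    (t := Finset.univ) (fun x _ => Finset.mem_univ _) f]
  apply Finset.sum_congr rfl
  intro y _
  rw [Finset.filter_filter]
  apply Finset.sum_congr _ (fun _ _ => rfl)
  apply Finset.filter_congr
  intro t' _
  constructor
  · rintro ⟨h1, h2⟩ i hi
    rcases Nat.lt_or_ge (i : ℕ) k with h | h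
    · rw [Function.update_of_ne (by intro he; rw [he] at h; simp at h) _ _]
      exact h1 i h
    · have hik : i = ⟨k, hk⟩ := Fin.ext (by simp only [Fin.val_mk]; omega)
      subst hik
      rw [Function.update_self]
      exact h2
  · intro h
    constructor
    · intro i hi
      have h' := h i (by omega)
      rwa [Function.update_of_ne (by intro he; rw [he] at hi; simp at hi) _ _] at h'
    · have h' := h ⟨k, hk⟩ (by simp only [Fin.val_mk]; omega)
      rwa [Function.update_self] at h'

lemma partialSum_lead {n : ℕ} (f : (∀ i, S i) → Polynomial ℝ)
    (hdeg : ∀ s, (f s).natDegree = n) (hlead : ∀ s, 0 < (f s).leadingCoeff)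
    (k : ℕ) (s : ∀ i, S i) :
    (partialSum m S f k s).natDegree = n ∧ 0 < (partialSum m S f k s).leadingCoeff := by
  apply sum_natDegree_leadingCoeff _ ⟨s, by simp⟩ _ n (fun t _ => hdeg t) (fun t _ => hlead t)

end Helpers

/-- In an interlacing family some assignment has largest root at most the largest root of
the sum over all assignments. -/
theorem interlacingFamily_exists_le_maxRoot (m n : ℕ) (S : Fin m → Type)
    [∀ i, Fintype (S i)] [∀ i, Nonempty (S i)] (f : (∀ i, S i) → Polynomial ℝ)
    (hrr : ∀ s, RealRooted (f s)) (hdeg : ∀ s, (f s).natDegree = n)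
    (hlead : ∀ s, 0 < (f s).leadingCoeff)
    (hfam : InterlacingFamily m S f) :
    ∃ s : ∀ i, S i, maxRoot (f s) ≤ maxRoot (∑ t : ∀ i, S i, f t) := by
  have main : ∀ k, k ≤ m →
      ∃ s : ∀ i, S i, maxRoot (partialSum m S f k s) ≤ maxRoot (∑ t : ∀ i, S i, f t) := by
    intro k
    induction k with
    | zero =>
      intro _
      refine ⟨Classical.arbitrary _, ?_⟩
      rw [partialSum_zero]
    | succ k ih =>
      intro hk1
      have hk : k < m := by omega
      obtain ⟨s, hs⟩ := ih (by omega)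
      obtain ⟨g, hgm, hgI⟩ := hfam k hk s
      have hFl : ∀ t : S ⟨k, hk⟩,
          0 < (partialSum m S f (k + 1) (Function.update s ⟨k, hk⟩ t)).leadingCoeff :=
        fun t => (partialSum_lead f hdeg hlead (k + 1) _).2
      obtain ⟨t, ht⟩ := key_lemma _ g hgm hgI hFl
      refine ⟨Function.update s ⟨k, hk⟩ t, le_trans ht ?_⟩
      rw [← partialSum_succ f k hk s]
      exact hs
  obtain ⟨s, hs⟩ := main m le_rfl
  exact ⟨s, by rwa [partialSum_last] at hs⟩
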